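/- Let g : ℝ^D → ℝ^d be L-Lipschitz in ℓ₂ norm, and let c₁, c₂ ∈ ℝ^d be distinct with ‖g(x) − c₁‖₂ < ‖g(x) − c₂‖₂ for some x ∈ ℝ^D. Set γ = (‖c₂ − g(x)‖₂² − ‖c₁ − g(x)‖₂²)/(2‖c₂ − c₁‖₂) and r = γ/L. Then for every δ ∈ ℝ^D with ‖δ‖₂ < r, we have ‖g(x+δ) − c₁‖₂ < ‖g(x+δ) − c₂‖₂. -/

import Mathlib

theorem robustness_guarantee
    (D d : ℕ) (L : ℝ) (hL : 0 < L)
    (g : EuclideanSpace ℝ (Fin D) → EuclideanSpace ℝ (Fin d))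
    (hLip : ∀ x x', ‖g x - g x'‖ ≤ L * ‖x - x'‖)
    (c₁ c₂ : EuclideanSpace ℝ (Fin d)) (hne : c₁ ≠ c₂)
    (x : EuclideanSpace ℝ (Fin D))
    (hcloser : ‖g x - c₁‖ < ‖g x - c₂‖)
    (γ r : ℝ)
    (hγ : γ = (‖c₂ - g x‖ ^ 2 - ‖c₁ - g x‖ ^ 2) / (2 * ‖c₂ - c₁‖))
    (hr : r = γ / L) :
    ∀ δ : EuclideanSpace ℝ (Fin D), ‖δ‖ < r →
      ‖g (x + δ) - c₁‖ < ‖g (x + δ) - c₂‖ := by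
  intro δ hδ
  set z := g x with hz
  set z' := g (x + δ) with hz'
  have hc : (0:ℝ) < ‖c₂ - c₁‖ := by
    rw [norm_pos_iff]
    exact sub_ne_zero.mpr (Ne.symm hne)
  -- rewrite γ using reversed norms
  have hrev1 : ‖c₂ - z‖ = ‖z - c₂‖ := norm_sub_rev _ _
  have hrev2 : ‖c₁ - z‖ = ‖z - c₁‖ := norm_sub_rev _ _
  have hfz : ‖z - c₂‖ ^ 2 - ‖z - c₁‖ ^ 2 = γ * (2 * ‖c₂ - c₁‖) := by
    rw [hγ, hrev1, hrev2, div_mul_cancel₀]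
    positivity
  have hγpos : 0 < γ := by
    rw [hγ]
    apply div_pos
    · rw [hrev1, hrev2]
      have h1 : 0 ≤ ‖z - c₁‖ := norm_nonneg _
      nlinarith [hcloser]
    · positivity
  have hmove : ‖z' - z‖ < γ := by
    have h1 : ‖z' - z‖ ≤ L * ‖(x + δ) - x‖ := hLip _ _
    have h2 : (x + δ) - x = δ := by abel
    rw [h2] at h1
    have h3 : L * ‖δ‖ < L * r := by
      apply mul_lt_mul_of_pos_left hδ hL
    have h4 : L * r = γ := by rw [hr]; field_simp
    linarith
  have expand : ∀ y : EuclideanSpace ℝ (Fin d),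
      ‖y - c₂‖ ^ 2 - ‖y - c₁‖ ^ 2
        = ‖c₂‖ ^ 2 - ‖c₁‖ ^ 2 - 2 * (inner ℝ (y : EuclideanSpace ℝ (Fin d)) (c₂ - c₁) : ℝ) := by
    intro y
    have e2 : ‖y - c₂‖ ^ 2 = ‖y‖ ^ 2 - 2 * (inner ℝ y c₂ : ℝ) + ‖c₂‖ ^ 2 :=
      norm_sub_sq_real y c₂
    have e1 : ‖y - c₁‖ ^ 2 = ‖y‖ ^ 2 - 2 * (inner ℝ y c₁ : ℝ) + ‖c₁‖ ^ 2 :=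
      norm_sub_sq_real y c₁
    rw [e1, e2, inner_sub_right]
    ring
  have hdiff :
      (‖z' - c₂‖ ^ 2 - ‖z' - c₁‖ ^ 2) - (‖z - c₂‖ ^ 2 - ‖z - c₁‖ ^ 2)
        = -2 * (inner ℝ (z' - z) (c₂ - c₁) : ℝ) := by
    rw [expand z', expand z, inner_sub_left]
    ring
  have hip : (inner ℝ (z' - z) (c₂ - c₁) : ℝ) ≤ ‖z' - z‖ * ‖c₂ - c₁‖ :=
    real_inner_le_norm _ _
  have hsq : ‖z' - c₁‖ ^ 2 < ‖z' - c₂‖ ^ 2 := by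
    nlinarith [hfz, hdiff, hip, hmove, hc]
  exact lt_of_pow_lt_pow_left₀ 2 (norm_nonneg _) hsq
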